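/- The function κ(x) := sup{ κ_n(x) : n ∈ ℕ, n ≥ 2 } is discontinuous at every point of [0,1]. -/

import Mathlib

/-- `u` is a `p/q`-power: `u = x^n ++ y` with `x` nonempty, `y` a prefix of `x`,
`ℓ(u) = p` and `ℓ(x) = q`. -/
def IsPQPower {α : Type*} (u : List α) (p q : ℕ) : Prop :=
  0 < p ∧ 0 < q ∧ u.length = p ∧
    ∃ (x y : List α) (n : ℕ), x ≠ [] ∧ 0 < n ∧ y <+: x ∧ x.length = q ∧
      u = (List.replicate n x).flatten ++ y

/-- `u` is an `s`-power for the rational `s`. -/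
def IsPowerOfExp {α : Type*} (u : List α) (s : ℚ) : Prop :=
  ∃ p q : ℕ, IsPQPower u p q ∧ s = (p : ℚ) / q

/-- the finite word `u` occurs as a (contiguous) subword of the infinite word `w`. -/
def InfOccurs {α : Type*} (u : List α) (w : ℕ → α) : Prop :=
  ∃ i : ℕ, u = (List.range u.length).map fun k => w (i + k)

/-- the finite word `w` contains an `r`-power. -/
def ContainsPowFin {α : Type*} (w : List α) (r : ℚ) : Prop :=
  ∃ u : List α, u <:+: w ∧ ∃ s : ℚ, r ≤ s ∧ IsPowerOfExp u s

/-- the infinite word `w` contains an `r`-power. -/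
def ContainsPowInf {α : Type*} (w : ℕ → α) (r : ℚ) : Prop :=
  ∃ u : List α, InfOccurs u w ∧ ∃ s : ℚ, r ≤ s ∧ IsPowerOfExp u s

open Classical in
/-- critical exponent of a finite word. -/
noncomputable def Efin {α : Type*} (w : List α) : EReal :=
  if w = [] then 0
  else sSup {x : EReal | ∃ r : ℚ, ContainsPowFin w r ∧ x = ((r : ℝ) : EReal)}

/-- critical exponent of an infinite word. -/
noncomputable def Einf {α : Type*} (w : ℕ → α) : EReal :=
  sSup {x : EReal | ∃ r : ℚ, ContainsPowInf w r ∧ x = ((r : ℝ) : EReal)}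

/-- concatenation of a finite and an infinite word. -/
def wordCat {α : Type*} (w : List α) (y : ℕ → α) : ℕ → α :=
  fun n => if h : n < w.length then w[n] else y (n - w.length)

/-- the `k`-th digit of the base-`b` expansion of `x`, choosing for `b`-adic
rationals the expansion whose digits are ultimately `b - 1`. -/
noncomputable def baseDigit (b : ℕ) (x : ℝ) (k : ℕ) : ℕ :=
  if x ≤ 0 then 0
  else (⌈x * b ^ (k + 1)⌉ - b * ⌈x * b ^ k⌉ + ((b : ℤ) - 1)).toNat

/-- the base-`b` critical exponent function `κ_b`, with the convention `1/∞ = 0`. -/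
noncomputable def kappaBase (b : ℕ) (x : ℝ) : ℝ :=
  1 / (Einf (baseDigit b x)).toReal

/-- the `2`-critical exponent function `κ₂`. -/
noncomputable def kappa2 : ℝ → ℝ := kappaBase 2

/-- The Thue–Morse sequence. -/
def tm : ℕ → Fin 2
  | 0 => 0
  | (n + 1) => if (n + 1) % 2 = 0 then tm ((n + 1) / 2) else 1 - tm ((n + 1) / 2)
decreasing_by all_goals omega

/-- the real number whose binary expansion is the Thue–Morse sequence. -/
noncomputable def xtau : ℝ := ∑' i : ℕ, ((tm i : ℕ) : ℝ) / 2 ^ (i + 1)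

/-- `κ(x) = sup { κ_n(x) : n ∈ ℕ, n ≥ 2 }`. -/
noncomputable def kappaSup (x : ℝ) : ℝ :=
  sSup {y : ℝ | ∃ n : ℕ, 2 ≤ n ∧ y = kappaBase n x}

/-! ### Auxiliary lemmas: the Thue–Morse sequence -/

lemma tm_two_mul (m : ℕ) : tm (2 * m) = tm m := by
  cases m with
  | zero => rfl
  | succ m =>
    rw [show 2 * (m+1) = (2*m+1)+1 by ring, tm]
    have : (2*m+1+1) % 2 = 0 := by omega
    simp [this]
    congr 1
    omega

lemma tm_two_mul_add_one (m : ℕ) : tm (2 * m + 1) = 1 - tm m := by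
  rw [show 2 * m + 1 = (2*m)+1 by ring, tm]
  have : (2*m+1) % 2 ≠ 0 := by omega
  simp [this]
  congr 1
  omega

lemma fin2_sub_ne (t : Fin 2) : 1 - t ≠ t := by fin_cases t <;> decide

lemma fin2_sub_sub (t : Fin 2) : 1 - (1 - t) = t := by fin_cases t <;> decide

lemma fin2_sub_inj {a b : Fin 2} (h : 1 - a = 1 - b) : a = b := by
  fin_cases a <;> fin_cases b <;> simp_all

lemma tm_pair_ne (m : ℕ) : tm (2 * m) ≠ tm (2 * m + 1) := by
  rw [tm_two_mul, tm_two_mul_add_one]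
  exact (fin2_sub_ne (tm m)).symm

lemma tm_no_three (j : ℕ) : ¬ (tm j = tm (j+1) ∧ tm (j+1) = tm (j+2)) := by
  rintro ⟨h1, h2⟩
  rcases Nat.even_or_odd j with ⟨m, hm⟩ | ⟨m, hm⟩
  · have := tm_pair_ne m
    rw [show 2*m = j by omega] at this
    exact this h1
  · have := tm_pair_ne (m+1)
    rw [show 2*(m+1) = j+1 by omega] at this
    exact this h2

/-- Thue's theorem: the Thue–Morse sequence is overlap-free. -/
theorem tm_overlap_free (q : ℕ) (hq : 0 < q) :
    ∀ i : ℕ, ¬ (∀ k ≤ q, tm (i + k) = tm (i + q + k)) := by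
  induction q using Nat.strong_induction_on with
  | _ q IH =>
  intro i h
  rcases Nat.even_or_odd q with ⟨e, he⟩ | ⟨e, he⟩
  · have hepos : 0 < e := by omega
    have helt : e < q := by omega
    rcases Nat.even_or_odd i with ⟨a, ha⟩ | ⟨a, ha⟩
    · refine IH e helt hepos a ?_
      intro k hk
      have h0 := h (2*k) (by omega)
      rw [show i + 2*k = 2*(a+k) by omega, show i + q + 2*k = 2*(a+e+k) by omega,
        tm_two_mul, tm_two_mul] at h0
      exact h0
    · refine IH e helt hepos a ?_
      intro k hk
      have h0 := h (2*k) (by omega)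
      rw [show i + 2*k = 2*(a+k)+1 by omega, show i + q + 2*k = 2*(a+e+k)+1 by omega,
        tm_two_mul_add_one, tm_two_mul_add_one] at h0
      exact fin2_sub_inj h0
  · have step : ∀ m, i ≤ 2*m → 2*m+1 ≤ i + q → tm (m+e) = tm (m+e+1) := by
      intro m h1 h2
      have e0 := h (2*m - i) (by omega)
      rw [show i + (2*m - i) = 2*m by omega,
        show i + q + (2*m - i) = 2*(m+e)+1 by omega,
        tm_two_mul, tm_two_mul_add_one] at e0
      have e1 := h (2*m + 1 - i) (by omega)
      rw [show i + (2*m + 1 - i) = 2*m+1 by omega,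
        show i + q + (2*m + 1 - i) = 2*(m+e+1) by omega,
        tm_two_mul_add_one, tm_two_mul] at e1
      calc tm (m+e) = 1 - (1 - tm (m+e)) := (fin2_sub_sub _).symm
        _ = 1 - tm m := by rw [e0]
        _ = tm (m+e+1) := e1
    rcases Nat.eq_or_lt_of_le hq with h1 | hq2
    · refine tm_no_three i ⟨?_, ?_⟩
      · have := h 0 (by omega)
        rw [show i + 0 = i by omega, show i + q + 0 = i + 1 by omega] at this
        exact this
      · have := h 1 (by omega)
        rw [show i + q + 1 = i + 2 by omega] at this
        exact this
    · have hepos : 1 ≤ e := by omega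
      by_cases hcase : (i % 2 = 0 ∨ 2 ≤ e)
      · obtain ⟨m, hm1, hm2⟩ : ∃ m, i ≤ 2*m ∧ 2*m+3 ≤ i + q := by
          rcases hcase with hie | he2
          · exact ⟨i/2, by omega, by omega⟩
          · exact ⟨(i+1)/2, by omega, by omega⟩
        have s1 := step m hm1 (by omega)
        have s2 := step (m+1) (by omega) (by omega)
        refine tm_no_three (m+e) ⟨s1, ?_⟩
        rw [show m+e+2 = m+1+e+1 by omega, show m+e+1 = m+1+e by omega]
        exact s2
      · push_neg at hcase
        obtain ⟨hio, he1⟩ := hcase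
        obtain ⟨a, ha⟩ : ∃ a, i = 2*a+1 := ⟨i/2, by omega⟩
        have e0 := h 0 (by omega)
        rw [show i + 0 = 2*a+1 by omega, show i + q + 0 = 2*(a+2) by omega,
          tm_two_mul_add_one, tm_two_mul] at e0
        have e1 := h 1 (by omega)
        rw [show i + 1 = 2*(a+1) by omega, show i + q + 1 = 2*(a+2)+1 by omega,
          tm_two_mul, tm_two_mul_add_one] at e1
        have e2 := h 2 (by omega)
        rw [show i + 2 = 2*(a+1)+1 by omega, show i + q + 2 = 2*(a+3) by omega,
          tm_two_mul_add_one, tm_two_mul] at e2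
        have e3 := h 3 (by omega)
        rw [show i + 3 = 2*(a+2) by omega, show i + q + 3 = 2*(a+3)+1 by omega,
          tm_two_mul, tm_two_mul_add_one] at e3
        have h12 : tm (a+1) = tm a := by rw [e1, ← e0, fin2_sub_sub]
        have h3 : tm (a+3) = 1 - tm a := by rw [← e2, h12]
        have h2' : tm (a+2) = tm a := by rw [e3, h3, fin2_sub_sub]
        rw [h2'] at e0
        exact fin2_sub_ne (tm a) e0

/-! ### Auxiliary lemmas: powers in words -/

lemma pq_prefix {α : Type*} {u : List α} {p q : ℕ} (h : IsPQPower u p q) :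
    ∃ x : List α, x.length = q ∧ u <+: x ++ u := by
  obtain ⟨hp, hq, hlen, x, y, n, hx, hn, hyx, hxq, hu⟩ := h
  refine ⟨x, hxq, ?_⟩
  have hflat : ∀ m : ℕ, x ++ (List.replicate m x).flatten = (List.replicate m x).flatten ++ x := by
    intro m
    induction m with
    | zero => simp
    | succ m ih =>
      simp only [List.replicate_succ, List.flatten_cons, List.append_assoc, ih]
      rw [← List.append_assoc, ih, List.append_assoc]
  obtain ⟨t, ht⟩ := hyx
  rw [hu]
  refine ⟨t ++ y, ?_⟩
  rw [List.append_assoc, ← List.append_assoc y t y, ht, ← List.append_assoc, ← hflat,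
    List.append_assoc]

lemma pq_period {α : Type*} {u : List α} {p q : ℕ} (h : IsPQPower u p q) (j : ℕ)
    (hj : j + q < u.length) :
    u[j]'(by omega) = u[(j+q)]'hj := by
  obtain ⟨x, hxq, hpre⟩ := pq_prefix h
  have h1 : u[(j+q)]'hj = (x ++ u)[j+q]'(by simp; omega) := hpre.getElem hj
  rw [h1, List.getElem_append_right (by omega)]
  congr 1
  omega

lemma map_range_flatten {α : Type*} (f : ℕ → α) (T N : ℕ) (hf : ∀ k, f (T + k) = f k) :
    (List.range (N*T)).map f = (List.replicate N ((List.range T).map f)).flatten := by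
  induction N with
  | zero => simp
  | succ N ih =>
    rw [show (N+1)*T = T + N*T by ring, List.range_add, List.map_append, List.map_map,
      List.replicate_succ, List.flatten_cons]
    congr 1
    rw [← ih]
    exact List.map_congr_left (fun a _ => hf a)

lemma containsPowInf_of_periodic {α : Type*} (w : ℕ → α) (K T : ℕ) (hT : 0 < T)
    (hp : ∀ k, K ≤ k → w (k + T) = w k) (r : ℚ) : ContainsPowInf w r := by
  set N : ℕ := max 1 (⌈r⌉.toNat) with hN
  have hN1 : 1 ≤ N := le_max_left _ _
  have hrN : r ≤ (N : ℚ) := by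
    calc r ≤ (⌈r⌉ : ℚ) := Int.le_ceil r
    _ ≤ ((⌈r⌉.toNat : ℤ) : ℚ) := by exact_mod_cast Int.self_le_toNat _
    _ ≤ (N : ℚ) := by exact_mod_cast Nat.cast_le.mpr (le_max_right _ _)
  set f : ℕ → α := fun k => w (K + k) with hfdef
  have hf : ∀ k, f (T + k) = f k := by
    intro k
    show w (K + (T + k)) = w (K + k)
    rw [show K + (T+k) = (K+k) + T by ring]
    exact hp (K+k) (by omega)
  set x : List α := (List.range T).map f with hx
  set u : List α := (List.range (N*T)).map f with hu
  have hulen : u.length = N * T := by simp [hu]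
  refine ⟨u, ⟨K, by rw [hulen]⟩, (N : ℚ), hrN, N*T, T, ?_, ?_⟩
  · refine ⟨by positivity, hT, hulen, x, [], N, ?_, by omega, List.nil_prefix, by simp [hx], ?_⟩
    · simp [hx]
      omega
    · rw [List.append_nil, hu, hx]
      exact map_range_flatten f T N hf
  · rw [Nat.cast_mul, mul_div_assoc, div_self (by exact_mod_cast hT.ne'), mul_one]

lemma einf_eq_top_of_periodic {α : Type*} (w : ℕ → α) (K T : ℕ) (hT : 0 < T)
    (hp : ∀ k, K ≤ k → w (k + T) = w k) : Einf w = ⊤ := by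
  rw [Einf, sSup_eq_top]
  intro b hb
  induction b using EReal.rec with
  | bot =>
    exact ⟨((0:ℚ):ℝ), ⟨0, containsPowInf_of_periodic w K T hT hp 0, rfl⟩, EReal.bot_lt_coe _⟩
  | coe c =>
    obtain ⟨r, hr⟩ := exists_rat_gt c
    exact ⟨((r:ℚ):ℝ), ⟨r, containsPowInf_of_periodic w K T hT hp r, rfl⟩,
      by exact_mod_cast hr⟩
  | top => exact absurd hb (lt_irrefl _)

lemma one_le_einf {α : Type*} (w : ℕ → α) : 1 ≤ Einf w := by
  have hmem : ((((1:ℚ)):ℝ) : EReal) ∈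
      {x : EReal | ∃ r : ℚ, ContainsPowInf w r ∧ x = ((r : ℝ) : EReal)} := by
    refine ⟨1, ⟨[w 0], ⟨0, by simp [List.range_succ]⟩, 1, le_refl _, 1, 1, ?_, by norm_num⟩, rfl⟩
    exact ⟨one_pos, one_pos, rfl, [w 0], [], 1, by simp, one_pos, List.nil_prefix, rfl, by simp⟩
  have := le_sSup hmem
  rw [Einf]
  refine le_trans (le_of_eq ?_) this
  norm_num

lemma einf_le_two {α : Type*} (w : ℕ → α)
    (hC : ∀ (u : List α) (p q : ℕ), InfOccurs u w → IsPQPower u p q → p ≤ 2 * q) :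
    Einf w ≤ ((2:ℝ) : EReal) := by
  rw [Einf]
  refine sSup_le ?_
  rintro z ⟨r, ⟨u, hocc, s, hrs, p, q, hpq, hs⟩, rfl⟩
  have hq : 0 < q := hpq.2.1
  have hple : p ≤ 2 * q := hC u p q hocc hpq
  have hs2 : s ≤ 2 := by
    rw [hs, div_le_iff₀ (by exact_mod_cast hq)]
    exact_mod_cast hple
  have : r ≤ 2 := le_trans hrs hs2
  exact_mod_cast this

/-! ### Auxiliary lemmas: digit expansions of sums -/

section digits
variable {n : ℕ} (hn : 2 ≤ n)
include hn

lemma nR_pos : (0:ℝ) < n := by positivity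
lemma nR_one_lt : (1:ℝ) < n := by exact_mod_cast by omega
lemma nR_inv_lt : ((n:ℝ))⁻¹ < 1 := by
  rw [inv_lt_one_iff₀]; right; exact nR_one_lt hn

lemma term_eq (j : ℕ) (c : ℝ) : c/(n:ℝ)^(j+1) = (c * (n:ℝ)⁻¹) * ((n:ℝ)⁻¹)^j := by
  have := nR_pos hn
  rw [div_eq_mul_inv, pow_succ, mul_inv, inv_pow]
  ring

lemma geo_sum_eq : ∑' j : ℕ, ((n:ℝ) - 1)/n^(j+1) = 1 := by
  have hn0 := nR_pos hn
  have h1n := nR_one_lt hn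
  have hgeo : ∑' j : ℕ, ((n:ℝ)⁻¹)^j = (1 - (n:ℝ)⁻¹)⁻¹ :=
    tsum_geometric_of_lt_one (by positivity) (nR_inv_lt hn)
  rw [tsum_congr (fun j => term_eq hn j ((n:ℝ)-1)), tsum_mul_left, hgeo]
  have hne : (n:ℝ) - 1 ≠ 0 := by nlinarith
  have h1r : 1 - (n:ℝ)⁻¹ = ((n:ℝ)-1) / n := by field_simp
  rw [h1r]
  field_simp

lemma summable_geo : Summable (fun j : ℕ => ((n:ℝ) - 1)/(n:ℝ)^(j+1)) := by
  rw [funext (fun j => term_eq hn j ((n:ℝ)-1))]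
  exact (summable_geometric_of_lt_one (by positivity) (nR_inv_lt hn)).mul_left _

lemma summable_digits (e : ℕ → ℕ) (he : ∀ k, e k < n) :
    Summable (fun j : ℕ => (e j : ℝ)/n^(j+1)) := by
  have hn0 := nR_pos hn
  have hle : ∀ j : ℕ, (e j : ℝ)/n^(j+1) ≤ ((n:ℝ) - 1)/n^(j+1) := by
    intro j
    have h2 : (e j : ℝ) + 1 ≤ (n:ℝ) := by exact_mod_cast he j
    gcongr
    linarith
  have hpos : ∀ j : ℕ, (0:ℝ) ≤ (e j : ℝ)/n^(j+1) := fun j => by positivity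
  exact Summable.of_nonneg_of_le hpos hle (summable_geo hn)

variable (e : ℕ → ℕ) (he : ∀ k, e k < n)
include he

lemma tail_pos (k : ℕ) (h0 : ∃ j, k ≤ j ∧ e j ≠ 0) :
    0 < ∑' j : ℕ, (e (j + k) : ℝ)/n^(j+1) := by
  obtain ⟨j, hkj, hj⟩ := h0
  have hs : Summable (fun j : ℕ => (e (j + k) : ℝ)/n^(j+1)) :=
    summable_digits hn (fun j => e (j + k)) (fun j => he _)
  refine Summable.tsum_pos hs (fun i => by positivity) (j - k) ?_
  have : e (j - k + k) = e j := by congr 1; omega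
  rw [this]
  have h1 : (0:ℝ) < (e j : ℝ) := by exact_mod_cast Nat.pos_of_ne_zero hj
  positivity

lemma tail_lt_one (k : ℕ) (h1 : ∃ j, k ≤ j ∧ e j ≠ n - 1) :
    ∑' j : ℕ, (e (j + k) : ℝ)/n^(j+1) < 1 := by
  obtain ⟨j, hkj, hj⟩ := h1
  have hs : Summable (fun j : ℕ => (e (j + k) : ℝ)/n^(j+1)) :=
    summable_digits hn (fun j => e (j + k)) (fun j => he _)
  have hlt : ∑' j : ℕ, (e (j + k) : ℝ)/n^(j+1) < ∑' j : ℕ, ((n:ℝ) - 1)/n^(j+1) := by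
    refine Summable.tsum_lt_tsum (i := j - k) (fun i => ?_) ?_ hs (summable_geo hn)
    · have h2 : (e (i + k) : ℝ) + 1 ≤ (n:ℝ) := by exact_mod_cast he _
      gcongr
      linarith
    · have heq : e (j - k + k) = e j := by congr 1; omega
      rw [heq]
      have h2 : e j + 2 ≤ n := by have := he j; omega
      have h3 : (e j : ℝ) + 2 ≤ (n:ℝ) := by exact_mod_cast h2
      gcongr
      linarith
  calc _ < _ := hlt
  _ = 1 := geo_sum_eq hn

lemma key_split (k : ℕ) :
    (∑' i : ℕ, (e i : ℝ)/n^(i+1)) * n^k =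
      ((∑ i ∈ Finset.range k, (e i : ℤ) * n^(k-1-i) : ℤ) : ℝ)
        + ∑' j : ℕ, (e (j + k) : ℝ)/n^(j+1) := by
  have hn0 : (0:ℝ) < n := nR_pos hn
  have hs := summable_digits hn e he
  rw [← Summable.sum_add_tsum_nat_add k hs, add_mul]
  congr 1
  · push_cast
    rw [Finset.sum_mul]
    refine Finset.sum_congr rfl (fun i hi => ?_)
    have hik : i < k := Finset.mem_range.mp hi
    have hpow : (n:ℝ)^k = (n:ℝ)^(i+1) * (n:ℝ)^(k-1-i) := by
      rw [← pow_add]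
      congr 1
      omega
    rw [hpow]
    field_simp
  · rw [← tsum_mul_right]
    refine tsum_congr (fun j => ?_)
    have hpow : (n:ℝ)^(j+k+1) = (n:ℝ)^(j+1) * (n:ℝ)^k := by
      rw [← pow_add]; congr 1; omega
    rw [hpow]
    field_simp

lemma baseDigit_of_tsum
    (h0 : ∀ k, ∃ j, k ≤ j ∧ e j ≠ 0) (h1 : ∀ k, ∃ j, k ≤ j ∧ e j ≠ n - 1) :
    (0 < ∑' i : ℕ, (e i : ℝ)/n^(i+1)) ∧ (∑' i : ℕ, (e i : ℝ)/n^(i+1)) < 1 ∧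
    ∀ k, baseDigit n (∑' i : ℕ, (e i : ℝ)/n^(i+1)) k = e k := by
  set y : ℝ := ∑' i : ℕ, (e i : ℝ)/n^(i+1) with hy
  set T : ℕ → ℝ := fun k => ∑' j : ℕ, (e (j + k) : ℝ)/n^(j+1) with hT
  set S : ℕ → ℤ := fun k => ∑ i ∈ Finset.range k, (e i : ℤ) * n^(k-1-i) with hS
  have hkey : ∀ k, y * n^k = (S k : ℝ) + T k := fun k => key_split hn e he k
  have hTpos : ∀ k, 0 < T k := fun k => tail_pos hn e he k (h0 k)
  have hTlt : ∀ k, T k < 1 := fun k => tail_lt_one hn e he k (h1 k)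
  have hy0 : y = T 0 := by
    have := hkey 0
    simpa [hS] using this
  have hypos : 0 < y := hy0 ▸ hTpos 0
  have hylt : y < 1 := hy0 ▸ hTlt 0
  refine ⟨hypos, hylt, fun k => ?_⟩
  have hceil : ∀ k, ⌈y * n^k⌉ = S k + 1 := by
    intro k
    rw [hkey k, add_comm, Int.ceil_add_intCast]
    have h2 : ⌈T k⌉ = 1 := by
      have hle : ⌈T k⌉ ≤ 1 := Int.ceil_le.mpr (by exact_mod_cast (hTlt k).le)
      have hge : 0 < ⌈T k⌉ := Int.ceil_pos.mpr (hTpos k)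
      omega
    rw [h2]
    omega
  have hrec : S (k+1) = n * S k + e k := by
    rw [hS]
    simp only
    rw [Finset.sum_range_succ, Finset.mul_sum]
    have : ∀ i ∈ Finset.range k,
        (e i : ℤ) * n^(k+1-1-i) = n * ((e i : ℤ) * n^(k-1-i)) := by
      intro i hi
      have hik : i < k := Finset.mem_range.mp hi
      rw [show k+1-1-i = (k-1-i)+1 by omega, pow_succ]
      ring
    rw [Finset.sum_congr rfl this]
    simp
  rw [baseDigit, if_neg (not_le.mpr hypos), hceil (k+1), hceil k, hrec, mul_add, mul_one]
  omega
end digits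

/-! ### Digits of rationals are eventually periodic -/

lemma ceil_diff_fract (m : ℕ) {u v : ℝ} (hfr : Int.fract u = Int.fract v) :
    ⌈u * m⌉ - m * ⌈u⌉ = ⌈v * m⌉ - m * ⌈v⌉ := by
  have key : ∀ w : ℝ, ⌈w * m⌉ - m * ⌈w⌉ = ⌈Int.fract w * m⌉ - m * ⌈Int.fract w⌉ := by
    intro w
    have hw : w = Int.fract w + ⌊w⌋ := by rw [add_comm]; exact (Int.floor_add_fract w).symm
    have h1 : ⌈w * m⌉ = ⌈Int.fract w * m⌉ + ⌊w⌋ * m := by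
      conv_lhs => rw [hw]
      rw [add_mul]
      rw [show ((⌊w⌋ : ℝ) * m) = ((⌊w⌋ * m : ℤ) : ℝ) by push_cast; ring]
      exact Int.ceil_add_intCast _ _
    have h2 : ⌈w⌉ = ⌈Int.fract w⌉ + ⌊w⌋ := by
      conv_lhs => rw [hw]
      exact Int.ceil_add_intCast _ _
    rw [h1, h2]
    ring
  rw [key u, key v, hfr]

lemma rat_digits_periodic (m : ℕ) (hm : 2 ≤ m) (q : ℚ) (hq : 0 < q) :
    ∃ K T : ℕ, 0 < T ∧ ∀ k, K ≤ k → baseDigit m (q:ℝ) (k+T) = baseDigit m (q:ℝ) k := by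
  set a : ℕ := q.num.toNat with ha
  set b : ℕ := q.den with hb
  have hb0 : 0 < b := q.pos
  have hmap : ∀ k ∈ Finset.range (b+1), (a * m^k) % b ∈ Finset.range b :=
    fun k _ => Finset.mem_range.mpr (Nat.mod_lt _ hb0)
  obtain ⟨k1, hk1, k2, hk2, hne, heq⟩ :=
    Finset.exists_ne_map_eq_of_card_lt_of_maps_to (by simp) hmap
  wlog hlt : k1 < k2 generalizing k1 k2
  · exact this k2 hk2 k1 hk1 hne.symm heq.symm (by omega)
  refine ⟨k1, k2 - k1, by omega, fun k hk => ?_⟩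
  have hmod : a * m^(k + (k2 - k1)) ≡ a * m^k [MOD b] := by
    have h1 : a * m^k2 ≡ a * m^k1 [MOD b] := heq.symm
    have h2 := h1.mul_right (m^(k - k1))
    calc a * m^(k + (k2-k1)) = a * m^k2 * m^(k-k1) := by
          rw [mul_assoc, ← pow_add]; congr 2; omega
    _ ≡ a * m^k1 * m^(k-k1) [MOD b] := h2
    _ = a * m^k := by rw [mul_assoc, ← pow_add]; congr 2; omega
  obtain ⟨c, hc⟩ : ∃ c : ℕ, a * m^(k + (k2-k1)) = a * m^k + b * c := by
    have hge : a * m^k ≤ a * m^(k + (k2-k1)) :=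
      Nat.mul_le_mul_left _ (Nat.pow_le_pow_right (by omega) (by omega))
    have hdvd : b ∣ (a * m^(k + (k2-k1)) - a * m^k) := (Nat.modEq_iff_dvd' hge).mp hmod.symm
    obtain ⟨c, hc⟩ := hdvd
    exact ⟨c, by omega⟩
  have hqr : (q:ℝ) = (a:ℝ) / b := by
    rw [Rat.cast_def]
    congr 1
    rw [ha]
    norm_cast
    exact (Int.toNat_of_nonneg (by positivity)).symm
  have hfr : Int.fract ((q:ℝ) * m^(k + (k2-k1))) = Int.fract ((q:ℝ) * m^k) := by
    rw [Int.fract_eq_fract]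
    refine ⟨c, ?_⟩
    rw [hqr]
    have hbR : (b:ℝ) ≠ 0 := by positivity
    have hcR : (a:ℝ) * m^(k + (k2-k1)) = a * m^k + b * c := by exact_mod_cast hc
    field_simp
    push_cast
    linarith [hcR]
  have hq0 : ¬ ((q:ℝ) ≤ 0) := not_le.mpr (by exact_mod_cast hq)
  rw [baseDigit, baseDigit, if_neg hq0, if_neg hq0]
  congr 1
  have hd := ceil_diff_fract m hfr
  rw [show (q:ℝ) * m^(k + (k2-k1)) * m = (q:ℝ) * m^(k + (k2-k1) + 1) by rw [pow_succ]; ring,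
    show (q:ℝ) * m^k * m = (q:ℝ) * m^(k+1) by rw [pow_succ]; ring] at hd
  omega

/-! ### The κ functions -/

lemma ereal_one_ne_bot : (1:EReal) ≠ ⊥ := by
  rw [← EReal.coe_one]; exact EReal.coe_ne_bot 1

lemma fin2_eq (t : Fin 2) : t = 0 ∨ t = 1 := by fin_cases t <;> simp

lemma kappaBase_le_one (b : ℕ) (x : ℝ) : kappaBase b x ≤ 1 := by
  rw [kappaBase]
  set E := Einf (baseDigit b x) with hE
  rcases eq_or_ne E ⊤ with h | h
  · rw [h]
    simp
  · have h1 : 1 ≤ E := one_le_einf _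
    have ht : 1 ≤ E.toReal := by
      have := EReal.toReal_le_toReal h1 ereal_one_ne_bot h
      simpa using this
    rw [div_le_one (by linarith)]
    exact ht

lemma kappaBase_nonneg (b : ℕ) (x : ℝ) : 0 ≤ kappaBase b x := by
  rw [kappaBase]
  set E := Einf (baseDigit b x) with hE
  rcases eq_or_ne E ⊤ with h | h
  · rw [h]; simp
  · have h1 : 1 ≤ E := one_le_einf _
    have ht : 1 ≤ E.toReal := by
      have := EReal.toReal_le_toReal h1 ereal_one_ne_bot h
      simpa using this
    positivity

lemma kappaSup_bddAbove (x : ℝ) :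
    BddAbove {y : ℝ | ∃ n : ℕ, 2 ≤ n ∧ y = kappaBase n x} := by
  refine ⟨1, ?_⟩
  rintro z ⟨m, hm, rfl⟩
  exact kappaBase_le_one m x

lemma kappaSup_rat_eq_zero (q : ℚ) (hq : 0 < q) : kappaSup (q:ℝ) = 0 := by
  have hall : ∀ m : ℕ, 2 ≤ m → kappaBase m (q:ℝ) = 0 := by
    intro m hm
    obtain ⟨K, T, hT, hper⟩ := rat_digits_periodic m hm q hq
    have htop : Einf (baseDigit m (q:ℝ)) = ⊤ :=
      einf_eq_top_of_periodic _ K T hT hper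
    rw [kappaBase, htop]
    simp
  have hset : {y : ℝ | ∃ n : ℕ, 2 ≤ n ∧ y = kappaBase n (q:ℝ)} = {0} := by
    ext z
    constructor
    · rintro ⟨m, hm, rfl⟩
      exact hall m hm
    · rintro rfl
      exact ⟨2, le_refl _, (hall 2 (le_refl _)).symm⟩
  rw [kappaSup, hset, csSup_singleton]

/-! ### Points with large κ near any point -/

lemma exists_good_point (n : ℕ) (hn : 5 ≤ n) (d0 : ℕ) (hd0 : d0 < n) :
    ∃ y : ℝ, 0 < y ∧ y < 1 ∧ (d0:ℝ)/n < y ∧ y < ((d0:ℝ)+1)/n ∧ 1/2 ≤ kappaSup y := by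
  have hn2 : 2 ≤ n := by omega
  set a : ℕ := if d0 ≤ 1 then 2 else 0 with hadef
  have hane : ∀ t : ℕ, t ≤ 1 → a + t ≠ d0 := by
    intro t ht
    rcases le_or_gt d0 1 with h | h
    · rw [hadef, if_pos h]; omega
    · rw [hadef, if_neg (by omega)]; omega
  have ha3 : a ≤ 2 := by rw [hadef]; split <;> omega
  set e : ℕ → ℕ := fun k => if k = 0 then d0 else a + (tm (k-1) : ℕ) with hedef
  have htm_le : ∀ j, (tm j : ℕ) ≤ 1 := fun j => by omega
  have hesucc : ∀ k, k ≠ 0 → e k = a + (tm (k-1) : ℕ) := by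
    intro k hk
    rw [hedef]
    simp [hk]
  have he0 : e 0 = d0 := by simp [hedef]
  have he : ∀ k, e k < n := by
    intro k
    rcases eq_or_ne k 0 with rfl | hk
    · rw [he0]; exact hd0
    · rw [hesucc k hk]
      have := htm_le (k-1)
      omega
  have h0 : ∀ k, ∃ j, k ≤ j ∧ e j ≠ 0 := by
    intro k
    rcases fin2_eq (tm k) with h | h
    · refine ⟨2*k+2, by omega, ?_⟩
      rw [hesucc _ (by omega), show 2*k+2-1 = 2*k+1 by omega, tm_two_mul_add_one, h]
      simp
    · refine ⟨2*k+1, by omega, ?_⟩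
      rw [hesucc _ (by omega), show 2*k+1-1 = 2*k by omega, tm_two_mul, h]
      simp
  have h1 : ∀ k, ∃ j, k ≤ j ∧ e j ≠ n - 1 := by
    intro k
    refine ⟨k+1, by omega, ?_⟩
    rw [hesucc _ (by omega), show k+1-1 = k from rfl]
    have := htm_le k
    omega
  obtain ⟨hypos, hylt, hydig⟩ := baseDigit_of_tsum hn2 e he h0 h1
  set y : ℝ := ∑' i : ℕ, (e i : ℝ)/n^(i+1) with hy
  have hnR : (0:ℝ) < n := nR_pos hn2
  -- position of y
  have hsplit1 := key_split hn2 e he 1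
  have hS1 : (∑ i ∈ Finset.range 1, (e i : ℤ) * n^(1-1-i) : ℤ) = d0 := by
    rw [Finset.sum_range_one, he0]
    simp
  have hT1pos : 0 < ∑' j : ℕ, (e (j + 1) : ℝ)/n^(j+1) := tail_pos hn2 e he 1 (h0 1)
  have hT1lt : (∑' j : ℕ, (e (j + 1) : ℝ)/n^(j+1)) < 1 := tail_lt_one hn2 e he 1 (h1 1)
  have hyn : y * n = (d0:ℝ) + ∑' j : ℕ, (e (j + 1) : ℝ)/n^(j+1) := by
    rw [pow_one] at hsplit1
    rw [hy, hsplit1, hS1]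
    push_cast
    ring
  have hpos1 : (d0:ℝ)/n < y := by
    rw [div_lt_iff₀ hnR]
    nlinarith
  have hpos2 : y < ((d0:ℝ)+1)/n := by
    rw [lt_div_iff₀ hnR]
    nlinarith
  -- critical exponent bound
  have hword : ∀ k, baseDigit n y k = e k := hydig
  have hEle : Einf (baseDigit n y) ≤ ((2:ℝ):EReal) := by
    refine einf_le_two _ ?_
    intro u p q hocc hpq
    by_contra hcon
    push_neg at hcon
    have hq : 0 < q := hpq.2.1
    have hlen : u.length = p := hpq.2.2.1
    obtain ⟨i, hi⟩ := hocc
    have hval : ∀ j (hj : j < u.length), u[j]'hj = baseDigit n y (i + j) := by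
      intro j hj
      have hg := List.getElem_of_eq hi hj
      rw [hg, List.getElem_map, List.getElem_range]
    have hper : ∀ j, j + q < p → baseDigit n y (i+j) = baseDigit n y (i+j+q) := by
      intro j hj
      have h1 := pq_period hpq j (by omega)
      rw [hval j (by omega), hval (j+q) (by omega)] at h1
      rw [h1]
      congr 1
      omega
    -- p ≥ 2q + 1
    rcases Nat.eq_zero_or_pos i with hi0 | hip
    · have h00 := hper 0 (by omega)
      rw [hi0] at h00
      simp only [Nat.zero_add, Nat.add_zero, hword] at h00
      have hqq : e 0 = e q := by simpa using h00
      rw [he0, hesucc q (by omega)] at hqq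
      exact hane (tm (q-1) : ℕ) (htm_le _) hqq.symm
    · obtain ⟨i', rfl⟩ : ∃ i', i = i' + 1 := ⟨i - 1, by omega⟩
      refine tm_overlap_free q hq i' ?_
      intro k hk
      have hk2 : k + q < p := by omega
      have := hper k hk2
      rw [hword, hword] at this
      have h1 : e (i'+1+k) = e (i'+1+k+q) := this
      rw [hesucc _ (by omega), hesucc _ (by omega),
        show i'+1+k-1 = i'+k by omega, show i'+1+k+q-1 = i'+k+q by omega] at h1
      have h3 : (tm (i'+k) : ℕ) = (tm (i'+k+q) : ℕ) := by omega
      have h4 : tm (i'+k) = tm (i'+k+q) := Fin.val_injective h3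
      rw [h4]
      congr 1
      omega
  have hEge : (1:EReal) ≤ Einf (baseDigit n y) := one_le_einf _
  have hEne_top : Einf (baseDigit n y) ≠ ⊤ := by
    intro h
    rw [h] at hEle
    exact EReal.coe_ne_top 2 (top_le_iff.mp hEle)
  have hEne_bot : Einf (baseDigit n y) ≠ ⊥ := by
    intro h
    rw [h] at hEge
    exact ereal_one_ne_bot (le_bot_iff.mp hEge)
  have ht1 : 1 ≤ (Einf (baseDigit n y)).toReal := by
    have := EReal.toReal_le_toReal hEge ereal_one_ne_bot hEne_top
    simpa using this
  have ht2 : (Einf (baseDigit n y)).toReal ≤ 2 := by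
    have := EReal.toReal_le_toReal hEle hEne_bot (EReal.coe_ne_top 2)
    simpa using this
  have hkb : 1/2 ≤ kappaBase n y := by
    rw [kappaBase]
    rw [div_le_div_iff₀ (by norm_num) (by linarith)]
    linarith
  refine ⟨y, hypos, hylt, hpos1, hpos2, le_trans hkb ?_⟩
  exact le_csSup (kappaSup_bddAbove y) ⟨n, by omega, rfl⟩

/-! ### Main theorem -/

theorem stmt_19 (x : ℝ) (hx : x ∈ Set.Icc (0 : ℝ) 1) :
    ¬ ContinuousWithinAt kappaSup (Set.Icc (0 : ℝ) 1) x := by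
  intro hcont
  obtain ⟨hx0, hx1⟩ := hx
  rw [Metric.continuousWithinAt_iff] at hcont
  obtain ⟨δ, hδ, hd⟩ := hcont (1/4) (by norm_num)
  -- rational point: kappaSup x is small
  have hrat : |kappaSup x| < 1/4 := by
    have hlo : max (x - δ) 0 < min (x + δ) 1 := by
      rcases max_cases (x - δ) 0 with ⟨h1, h2⟩ | ⟨h1, h2⟩ <;>
        rcases min_cases (x + δ) 1 with ⟨h3, h4⟩ | ⟨h3, h4⟩ <;> rw [h1, h3] <;> linarith
    obtain ⟨q, hq1, hq2⟩ := exists_rat_btwn hlo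
    have hq0 : (0:ℝ) < q := lt_of_le_of_lt (le_max_right _ _) hq1
    have hqQ : (0:ℚ) < q := by exact_mod_cast hq0
    have hmem : (q:ℝ) ∈ Set.Icc (0:ℝ) 1 :=
      ⟨hq0.le, le_trans hq2.le (min_le_right _ _)⟩
    have hdist : dist (q:ℝ) x < δ := by
      rw [Real.dist_eq, abs_lt]
      constructor
      · have := lt_of_le_of_lt (le_max_left (x-δ) 0) hq1
        linarith
      · have := lt_of_lt_of_le hq2 (min_le_left (x+δ) 1)
        linarith
    have := hd hmem hdist
    rw [kappaSup_rat_eq_zero q hqQ, Real.dist_eq] at this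
    rw [abs_sub_comm] at this
    simpa using this
  -- good point: kappaSup x is large
  have hbig : 1/4 < kappaSup x := by
    obtain ⟨n, hnbig⟩ := exists_nat_gt (max 5 (2/δ))
    have hn5 : 5 ≤ n := by
      have := le_max_left 5 (2/δ)
      have h2 : (5:ℝ) < n := lt_of_le_of_lt this hnbig
      exact_mod_cast h2.le
    have hnδ : 2/δ < n := lt_of_le_of_lt (le_max_right _ _) hnbig
    have hnR : (0:ℝ) < n := by positivity
    have hδn : 1/(n:ℝ) < δ := by
      rw [div_lt_iff₀ hnR]
      rw [div_lt_iff₀ hδ] at hnδ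
      nlinarith
    set d0 : ℕ := min (⌊x * n⌋.toNat) (n-1) with hd0def
    have hd0n : d0 < n := by
      have : d0 ≤ n - 1 := min_le_right _ _
      omega
    have hfl0 : (0:ℤ) ≤ ⌊x * n⌋ := Int.le_floor.mpr (by push_cast; exact mul_nonneg hx0 hnR.le)
    have hboth : (d0:ℝ) ≤ x * n ∧ x * n ≤ (d0:ℝ) + 1 := by
      rcases le_or_gt (⌊x * n⌋.toNat) (n-1) with h | h
      · have hdd : d0 = ⌊x * n⌋.toNat := min_eq_left h
        have hcast : (d0:ℝ) = ((⌊x * n⌋ : ℤ) : ℝ) := by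
          rw [hdd]
          exact_mod_cast congrArg (Int.cast : ℤ → ℝ) (Int.toNat_of_nonneg hfl0)
        constructor
        · rw [hcast]; exact Int.floor_le _
        · rw [hcast]; linarith [Int.lt_floor_add_one (x * n)]
      · have hdd : d0 = n - 1 := min_eq_right (by omega)
        have hflge : (n:ℤ) ≤ ⌊x * n⌋ := by
          have := Int.toNat_of_nonneg hfl0
          omega
        have hflR : (n:ℝ) ≤ x * n := by
          calc (n:ℝ) ≤ ((⌊x * n⌋ : ℤ) : ℝ) := by exact_mod_cast hflge
          _ ≤ x * n := Int.floor_le _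
        have hxle : x * n ≤ n := by nlinarith
        have hcast : (d0:ℝ) = (n:ℝ) - 1 := by
          rw [hdd]
          push_cast [Nat.cast_sub (by omega : 1 ≤ n)]
          ring
        constructor
        · rw [hcast]; linarith
        · rw [hcast]; linarith
    obtain ⟨hbound1, hbound2⟩ := hboth
    have hxlo : (d0:ℝ)/n ≤ x := by rw [div_le_iff₀ hnR]; linarith
    have hxhi : x ≤ ((d0:ℝ)+1)/n := by rw [le_div_iff₀ hnR]; linarith
    obtain ⟨y, hy0, hy1, hylo, hyhi, hky⟩ := exists_good_point n hn5 d0 hd0n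
    have hymem : y ∈ Set.Icc (0:ℝ) 1 := ⟨hy0.le, hy1.le⟩
    have hdiff : ((d0:ℝ)+1)/n - (d0:ℝ)/n = 1/n := by field_simp; ring
    have hydist : dist y x < δ := by
      rw [Real.dist_eq, abs_lt]
      constructor
      · linarith
      · linarith
    have := hd hymem hydist
    rw [Real.dist_eq, abs_lt] at this
    linarith
  rw [abs_lt] at hrat
  linarith
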